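/- For every real number x with 0 < |x| < π/2, one has ((π² − 4x²)/π²)^(π²/24) ≤ (sin x)/x. -/

import Mathlib

open Real

lemma partial_basel (N : ℕ) :
    ∑ j ∈ Finset.range N, (1 : ℝ) / (4 * ((j : ℝ) + 1) ^ 2) ≤ π ^ 2 / 24 := by
  have h : ∑ j ∈ Finset.range N, (1 : ℝ) / ((j : ℝ) + 1) ^ 2 ≤ π ^ 2 / 6 := by
    have h2 : ∑ j ∈ Finset.range (N + 1), (1 : ℝ) / (j : ℝ) ^ 2 ≤ π ^ 2 / 6 :=
      sum_le_hasSum _ (fun i _ => by positivity) hasSum_zeta_two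
    rw [Finset.sum_range_succ'] at h2
    simpa using h2
  have : ∑ j ∈ Finset.range N, (1 : ℝ) / (4 * ((j : ℝ) + 1) ^ 2)
      = (∑ j ∈ Finset.range N, (1 : ℝ) / ((j : ℝ) + 1) ^ 2) / 4 := by
    rw [Finset.sum_div]
    congr 1 with j
    rw [div_div, mul_comm]
  rw [this]
  linarith

lemma key_ineq (x : ℝ) (hx : 0 < x) (hx2 : x < π / 2) :
    ((π ^ 2 - 4 * x ^ 2) / π ^ 2) ^ (π ^ 2 / 24) ≤ Real.sin x / x := by
  have hπ := Real.pi_pos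
  set u : ℝ := 4 * x ^ 2 / π ^ 2 with hu
  have hu0 : 0 < u := by positivity
  have hu1 : u < 1 := by
    rw [div_lt_one (by positivity)]
    nlinarith
  have hbase : (π ^ 2 - 4 * x ^ 2) / π ^ 2 = 1 - u := by
    rw [hu]; field_simp
  rw [hbase]
  set c : ℝ := (1 - u) ^ (π ^ 2 / 24) with hc
  -- lower bound each partial product by c
  have hprod : ∀ N : ℕ,
      c ≤ ∏ j ∈ Finset.range N, (1 - (x / π) ^ 2 / ((j : ℝ) + 1) ^ 2) := by
    intro N
    have hterm : ∀ j ∈ Finset.range N,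
        (1 - u) ^ ((1 : ℝ) / (4 * ((j : ℝ) + 1) ^ 2))
          ≤ 1 - (x / π) ^ 2 / ((j : ℝ) + 1) ^ 2 := by
      intro j _
      have hj : (0 : ℝ) < ((j : ℝ) + 1) ^ 2 := by positivity
      have ha1 : (1 : ℝ) / (4 * ((j : ℝ) + 1) ^ 2) ≤ 1 := by
        rw [div_le_one (by positivity)]
        have hj0 : (0:ℝ) ≤ (j:ℝ) := j.cast_nonneg
        nlinarith
      have ha0 : (0 : ℝ) ≤ 1 / (4 * ((j : ℝ) + 1) ^ 2) := by positivity
      have hb : (1 - (x / π) ^ 2 / ((j : ℝ) + 1) ^ 2)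
          = 1 + (1 / (4 * ((j : ℝ) + 1) ^ 2)) * (-u) := by
        rw [hu]; field_simp
        ring
      have := rpow_one_add_le_one_add_mul_self (s := -u) (by linarith) ha0 ha1
      rw [hb]
      calc (1 - u) ^ ((1 : ℝ) / (4 * ((j : ℝ) + 1) ^ 2))
          = (1 + -u) ^ ((1 : ℝ) / (4 * ((j : ℝ) + 1) ^ 2)) := by ring_nf
        _ ≤ 1 + (1 / (4 * ((j : ℝ) + 1) ^ 2)) * (-u) := this
    calc c ≤ (1 - u) ^ (∑ j ∈ Finset.range N, (1 : ℝ) / (4 * ((j : ℝ) + 1) ^ 2)) := by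
          apply Real.rpow_le_rpow_of_exponent_ge (by linarith) (by linarith)
          exact partial_basel N
      _ = ∏ j ∈ Finset.range N, (1 - u) ^ ((1 : ℝ) / (4 * ((j : ℝ) + 1) ^ 2)) :=
          Real.rpow_sum_of_pos (by linarith) _ _
      _ ≤ ∏ j ∈ Finset.range N, (1 - (x / π) ^ 2 / ((j : ℝ) + 1) ^ 2) :=
          Finset.prod_le_prod (fun j _ => Real.rpow_nonneg (by linarith) _) hterm
  -- Euler product
  have heuler := Real.tendsto_euler_sin_prod (x / π)
  have hxπ : π * (x / π) = x := by field_simp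
  rw [hxπ] at heuler
  have hsin : x * c ≤ Real.sin x := by
    refine ge_of_tendsto' heuler fun n => ?_
    exact mul_le_mul_of_nonneg_left (hprod n) hx.le
  rw [le_div_iff₀ hx]
  linarith

theorem stmt_2 (x : ℝ) (h0 : 0 < |x|) (h1 : |x| < π / 2) :
    ((π ^ 2 - 4 * x ^ 2) / π ^ 2) ^ (π ^ 2 / 24) ≤ Real.sin x / x := by
  have := key_ineq |x| h0 h1
  rcases abs_cases x with ⟨h, _⟩ | ⟨h, hneg⟩
  · rwa [h] at this
  · rw [h] at this
    rwa [neg_sq, Real.sin_neg, neg_div_neg_eq] at this
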